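/- Let G and H be nontrivial connected graphs. If S is a cycle hull set of the Cartesian product G □ H (i.e., the cycle convex hull of S equals V(G□H)), then the projection π_G(S) is a cycle hull set of G and the projection π_H(S) is a cycle hull set of H. -/

import Mathlib

open SimpleGraph

variable {V α β : Type*}

/-- A set `S` is cycle convex in `G` if no vertex outside `S` lies on a cycle in the
subgraph induced by `S ∪ {w}`. -/
def CycleConvex (G : SimpleGraph V) (S : Set V) : Prop :=
  ∀ w : V, w ∉ S →
    ∀ c : (G.induce (insert w S)).Walk ⟨w, Set.mem_insert w S⟩ ⟨w, Set.mem_insert w S⟩,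
      ¬ c.IsCycle

/-- The cycle convex hull of `S`: the smallest cycle convex set containing `S`. -/
def cycleHull (G : SimpleGraph V) (S : Set V) : Set V :=
  ⋂₀ {T : Set V | S ⊆ T ∧ CycleConvex G T}

/-- The cycle hull number: minimum size of a set whose cycle convex hull is everything. -/
noncomputable def cycleHullNumber (G : SimpleGraph V) : ℕ :=
  sInf {n : ℕ | ∃ S : Set V, S.ncard = n ∧ cycleHull G S = Set.univ}

/-- The cycle convexity number: maximum size of a proper cycle convex set. -/
noncomputable def cycleConvexityNumber (G : SimpleGraph V) : ℕ :=
  sSup {n : ℕ | ∃ S : Set V, S.ncard = n ∧ CycleConvex G S ∧ S ≠ Set.univ}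

/-- The independence number of a graph. -/
noncomputable def indepNumber (G : SimpleGraph V) : ℕ :=
  sSup {n : ℕ | ∃ S : Set V, S.ncard = n ∧ S.Pairwise fun a b => ¬ G.Adj a b}

/-- The strong product of two simple graphs. -/
def strongProd (G : SimpleGraph α) (H : SimpleGraph β) : SimpleGraph (α × β) where
  Adj x y := (G.Adj x.1 y.1 ∧ x.2 = y.2) ∨ (x.1 = y.1 ∧ H.Adj x.2 y.2) ∨
    (G.Adj x.1 y.1 ∧ H.Adj x.2 y.2)
  symm := ⟨fun x y h => by
    rcases h with ⟨h1, h2⟩ | ⟨h1, h2⟩ | ⟨h1, h2⟩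
    · exact Or.inl ⟨h1.symm, h2.symm⟩
    · exact Or.inr (Or.inl ⟨h1.symm, h2.symm⟩)
    · exact Or.inr (Or.inr ⟨h1.symm, h2.symm⟩)⟩
  loopless := ⟨fun x h => by
    rcases h with ⟨h1, _⟩ | ⟨_, h2⟩ | ⟨h1, _⟩
    · exact G.loopless.irrefl _ h1
    · exact H.loopless.irrefl _ h2
    · exact G.loopless.irrefl _ h1⟩

/-- The lexicographic product of two simple graphs. -/
def lexProd (G : SimpleGraph α) (H : SimpleGraph β) : SimpleGraph (α × β) where
  Adj x y := G.Adj x.1 y.1 ∨ (x.1 = y.1 ∧ H.Adj x.2 y.2)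
  symm := ⟨fun x y h => by
    rcases h with h1 | ⟨h1, h2⟩
    · exact Or.inl h1.symm
    · exact Or.inr ⟨h1.symm, h2.symm⟩⟩
  loopless := ⟨fun x h => by
    rcases h with h1 | ⟨_, h2⟩
    · exact G.loopless.irrefl _ h1
    · exact H.loopless.irrefl _ h2⟩


section Aux

variable {V α β : Type*} {G : SimpleGraph α} {H : SimpleGraph β}

lemma cycleConvex_sInter {G : SimpleGraph V} {𝒯 : Set (Set V)}
    (h : ∀ T ∈ 𝒯, CycleConvex G T) : CycleConvex G (⋂₀ 𝒯) := by
  intro w hw c hc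
  rw [Set.mem_sInter] at hw
  push_neg at hw
  obtain ⟨T, hT, hwT⟩ := hw
  have hsub : insert w (⋂₀ 𝒯) ⊆ insert w T :=
    Set.insert_subset_insert (Set.sInter_subset_of_mem hT)
  have f := G.induceHomOfLE hsub
  exact h T hT w hwT ((c.map (G.induceHomOfLE hsub).toHom))
    (hc.map (G.induceHomOfLE hsub).injective)

lemma cycle_neighbors {Γ : SimpleGraph V} {w : V} {c : Γ.Walk w w} (hc : c.IsCycle) :
    ∃ x y : V, ∃ q : Γ.Walk y x, Γ.Adj w x ∧ Γ.Adj w y ∧ x ≠ y ∧ w ∉ q.support := by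
  have hlen := hc.three_le_length
  cases c with
  | nil => simp at hlen
  | @cons _ x _ h q =>
    obtain ⟨hq, hedge⟩ := (SimpleGraph.Walk.cons_isCycle_iff q h).1 hc
    have hqrev : q.reverse.IsPath := hq.reverse
    cases hqr : q.reverse with
    | nil => exact absurd h (Γ.irrefl)
    | @cons _ y _ h' q' =>
      rw [hqr, SimpleGraph.Walk.cons_isPath_iff] at hqrev
      obtain ⟨hq', hw⟩ := hqrev
      refine ⟨x, y, q', h, h', ?_, hw⟩
      rintro rfl
      have hnil := SimpleGraph.Walk.isPath_iff_eq_nil.1 hq'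
      have hq1 : q.length = 1 := by
        rw [← SimpleGraph.Walk.length_reverse, hqr, hnil]; simp
      rw [SimpleGraph.Walk.length_cons, hq1] at hlen
      omega

lemma walk_proj_fst {U : Set (α × β)} {T : Set α} {u v : U}
    (p : ((G □ H).induce U).Walk u v)
    (hs : ∀ z ∈ p.support, (z : α × β).1 ∈ T)
    (hu : (u : α × β).1 ∈ T) (hv : (v : α × β).1 ∈ T) :
    (G.induce T).Reachable ⟨(u : α × β).1, hu⟩ ⟨(v : α × β).1, hv⟩ := by
  induction p with
  | nil => exact SimpleGraph.Reachable.refl _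
  | @cons u m v h p ih =>
    have hm : (m : α × β).1 ∈ T :=
      hs m (by simp [SimpleGraph.Walk.support_cons, p.start_mem_support])
    have hrest := ih (fun z hz => hs z (by simp [SimpleGraph.Walk.support_cons, hz])) hm hv
    have hadj : (G □ H).Adj u.val m.val := h
    rcases hadj with ⟨hg, _⟩ | ⟨_, he⟩
    · refine SimpleGraph.Reachable.trans ?_ hrest
      exact SimpleGraph.Adj.reachable (by exact hg :
        (G.induce T).Adj ⟨(u : α × β).1, hu⟩ ⟨(m : α × β).1, hm⟩)
    · have heq : (⟨(u : α × β).1, hu⟩ : T) = ⟨(m : α × β).1, hm⟩ := Subtype.ext he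
      rw [heq]; exact hrest

lemma walk_proj_snd {U : Set (α × β)} {T : Set β} {u v : U}
    (p : ((G □ H).induce U).Walk u v)
    (hs : ∀ z ∈ p.support, (z : α × β).2 ∈ T)
    (hu : (u : α × β).2 ∈ T) (hv : (v : α × β).2 ∈ T) :
    (H.induce T).Reachable ⟨(u : α × β).2, hu⟩ ⟨(v : α × β).2, hv⟩ := by
  induction p with
  | nil => exact SimpleGraph.Reachable.refl _
  | @cons u m v h p ih =>
    have hm : (m : α × β).2 ∈ T :=
      hs m (by simp [SimpleGraph.Walk.support_cons, p.start_mem_support])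
    have hrest := ih (fun z hz => hs z (by simp [SimpleGraph.Walk.support_cons, hz])) hm hv
    have hadj : (G □ H).Adj u.val m.val := h
    rcases hadj with ⟨_, he⟩ | ⟨hg, _⟩
    · have heq : (⟨(u : α × β).2, hu⟩ : T) = ⟨(m : α × β).2, hm⟩ := Subtype.ext he
      rw [heq]; exact hrest
    · refine SimpleGraph.Reachable.trans ?_ hrest
      exact SimpleGraph.Adj.reachable (by exact hg :
        (H.induce T).Adj ⟨(u : α × β).2, hu⟩ ⟨(m : α × β).2, hm⟩)

lemma not_convex_of {G : SimpleGraph V} {T : Set V} {w a b : V} (hw : w ∉ T)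
    (ha : a ∈ T) (hb : b ∈ T) (hab : a ≠ b) (hwa : G.Adj w a) (hwb : G.Adj w b)
    (hr : (G.induce T).Reachable ⟨a, ha⟩ ⟨b, hb⟩) (hconv : CycleConvex G T) : False := by
  classical
  obtain ⟨p0⟩ := hr
  let f := G.induceHomOfLE (Set.subset_insert w T)
  let p : (G.induce (insert w T)).Walk ⟨a, Set.mem_insert_of_mem w ha⟩
      ⟨b, Set.mem_insert_of_mem w hb⟩ := (p0.map f.toHom).bypass
  have hp : p.IsPath := SimpleGraph.Walk.bypass_isPath _
  have hsupp : ∀ z ∈ p.support, (z : V) ∈ T := by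
    intro z hz
    have h1 := SimpleGraph.Walk.support_bypass_subset _ hz
    replace h1 : z ∈ p0.support.map f.toHom := (SimpleGraph.Walk.support_map (f := f.toHom) (p := p0)) ▸ h1
    obtain ⟨z0, _, rfl⟩ := List.mem_map.1 h1
    exact z0.2
  have hwin : w ∈ insert w T := Set.mem_insert w T
  have hwns : (⟨w, hwin⟩ : ↥(insert w T)) ∉ p.support := fun hin => hw (hsupp _ hin)
  have hadj_a : (G.induce (insert w T)).Adj ⟨w, hwin⟩ ⟨a, Set.mem_insert_of_mem w ha⟩ := hwa
  have hadj_b : (G.induce (insert w T)).Adj ⟨b, Set.mem_insert_of_mem w hb⟩ ⟨w, hwin⟩ := hwb.symm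
  refine hconv w hw (SimpleGraph.Walk.cons hadj_a (p.concat hadj_b)) ?_
  rw [SimpleGraph.Walk.cons_isCycle_iff]
  constructor
  · have h2 : (p.concat hadj_b).reverse.IsPath := by
      rw [SimpleGraph.Walk.reverse_concat]
      refine SimpleGraph.Walk.IsPath.cons hp.reverse ?_
      rw [SimpleGraph.Walk.support_reverse, List.mem_reverse]
      exact hwns
    have h3 := h2.reverse
    rwa [SimpleGraph.Walk.reverse_reverse] at h3
  · rw [SimpleGraph.Walk.edges_concat]
    intro hmem0
    rw [List.concat_eq_append, List.mem_append, List.mem_singleton] at hmem0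
    rcases hmem0 with hmem | hmem
    · exact hwns (SimpleGraph.Walk.fst_mem_support_of_mem_edges _ hmem)
    · rw [Sym2.eq_iff] at hmem
      rcases hmem with ⟨h1, _⟩ | ⟨_, h2⟩
      · exact hw (show w ∈ T by rw [show w = b from congrArg Subtype.val h1]; exact hb)
      · exact hab (congrArg Subtype.val h2)

lemma convex_prod_fst {T : Set α} (hT : CycleConvex G T) :
    CycleConvex (G □ H) (T ×ˢ (Set.univ : Set β)) := by
  rintro w hw c hc
  have hw1 : w.1 ∉ T := fun h => hw (Set.mem_prod.2 ⟨h, trivial⟩)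
  obtain ⟨x, y, q, hwx, hwy, hxy, hwq⟩ := cycle_neighbors hc
  have hwx' : (G □ H).Adj w x.val := hwx
  have hwy' : (G □ H).Adj w y.val := hwy
  have hxmem : x.val ∈ T ×ˢ (Set.univ : Set β) := by
    rcases x.2 with h | h
    · exact absurd h hwx'.ne'
    · exact h
  have hymem : y.val ∈ T ×ˢ (Set.univ : Set β) := by
    rcases y.2 with h | h
    · exact absurd h hwy'.ne'
    · exact h
  have hxT : x.val.1 ∈ T := hxmem.1
  have hyT : y.val.1 ∈ T := hymem.1
  obtain ⟨hgx, hsx⟩ : G.Adj w.1 x.val.1 ∧ w.2 = x.val.2 := by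
    rcases hwx' with h | ⟨_, h⟩
    · exact h
    · exact absurd (h ▸ hxT) hw1
  obtain ⟨hgy, hsy⟩ : G.Adj w.1 y.val.1 ∧ w.2 = y.val.2 := by
    rcases hwy' with h | ⟨_, h⟩
    · exact h
    · exact absurd (h ▸ hyT) hw1
  have hne : x.val.1 ≠ y.val.1 := by
    intro h
    apply hxy
    exact Subtype.ext (Prod.ext h (hsx ▸ hsy ▸ rfl))
  have hs : ∀ z ∈ q.support, (z : α × β).1 ∈ T := by
    intro z hz
    rcases z.2 with h | h
    · exact absurd (Subtype.ext h : z = ⟨w, Set.mem_insert _ _⟩) (fun he => hwq (he ▸ hz))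
    · exact h.1
  have hr := walk_proj_fst q hs hyT hxT
  exact not_convex_of hw1 hxT hyT hne hgx hgy hr.symm hT

lemma convex_prod_snd {T : Set β} (hT : CycleConvex H T) :
    CycleConvex (G □ H) ((Set.univ : Set α) ×ˢ T) := by
  rintro w hw c hc
  have hw1 : w.2 ∉ T := fun h => hw (Set.mem_prod.2 ⟨trivial, h⟩)
  obtain ⟨x, y, q, hwx, hwy, hxy, hwq⟩ := cycle_neighbors hc
  have hwx' : (G □ H).Adj w x.val := hwx
  have hwy' : (G □ H).Adj w y.val := hwy
  have hxmem : x.val ∈ (Set.univ : Set α) ×ˢ T := by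
    rcases x.2 with h | h
    · exact absurd h hwx'.ne'
    · exact h
  have hymem : y.val ∈ (Set.univ : Set α) ×ˢ T := by
    rcases y.2 with h | h
    · exact absurd h hwy'.ne'
    · exact h
  have hxT : x.val.2 ∈ T := hxmem.2
  have hyT : y.val.2 ∈ T := hymem.2
  obtain ⟨hgx, hsx⟩ : H.Adj w.2 x.val.2 ∧ w.1 = x.val.1 := by
    rcases hwx' with ⟨_, h⟩ | h
    · exact absurd (h ▸ hxT) hw1
    · exact h
  obtain ⟨hgy, hsy⟩ : H.Adj w.2 y.val.2 ∧ w.1 = y.val.1 := by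
    rcases hwy' with ⟨_, h⟩ | h
    · exact absurd (h ▸ hyT) hw1
    · exact h
  have hne : x.val.2 ≠ y.val.2 := by
    intro h
    apply hxy
    exact Subtype.ext (Prod.ext (hsx ▸ hsy ▸ rfl) h)
  have hs : ∀ z ∈ q.support, (z : α × β).2 ∈ T := by
    intro z hz
    rcases z.2 with h | h
    · exact absurd (Subtype.ext h : z = ⟨w, Set.mem_insert _ _⟩) (fun he => hwq (he ▸ hz))
    · exact h.2
  have hr := walk_proj_snd q hs hyT hxT
  exact not_convex_of hw1 hxT hyT hne hgx hgy hr.symm hT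

end Aux

theorem stmt_5 [Fintype α] [Fintype β] (G : SimpleGraph α) (H : SimpleGraph β)
    [Nontrivial α] [Nontrivial β] (hG : G.Connected) (hH : H.Connected)
    (S : Set (α × β)) (hS : cycleHull (G □ H) S = Set.univ) :
    cycleHull G (Prod.fst '' S) = Set.univ ∧ cycleHull H (Prod.snd '' S) = Set.univ := by
  have hβ : Nonempty β := inferInstance
  have hα : Nonempty α := inferInstance
  constructor
  · have hKconv : CycleConvex G (cycleHull G (Prod.fst '' S)) :=
      cycleConvex_sInter (fun T' hT' => hT'.2)
    have hbig : CycleConvex (G □ H) ((cycleHull G (Prod.fst '' S)) ×ˢ (Set.univ : Set β)) :=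
      convex_prod_fst hKconv
    have hSsub : S ⊆ (cycleHull G (Prod.fst '' S)) ×ˢ (Set.univ : Set β) := by
      rintro z hz
      refine ⟨?_, trivial⟩
      intro T' hT'
      exact hT'.1 ⟨z, hz, rfl⟩
    have hsub : cycleHull (G □ H) S ⊆ (cycleHull G (Prod.fst '' S)) ×ˢ (Set.univ : Set β) :=
      Set.sInter_subset_of_mem ⟨hSsub, hbig⟩
    rw [hS] at hsub
    refine Set.eq_univ_of_forall (fun g => ?_)
    obtain ⟨h⟩ := hβ
    exact (hsub (Set.mem_univ (g, h))).1
  · have hKconv : CycleConvex H (cycleHull H (Prod.snd '' S)) :=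
      cycleConvex_sInter (fun T' hT' => hT'.2)
    have hbig : CycleConvex (G □ H) ((Set.univ : Set α) ×ˢ (cycleHull H (Prod.snd '' S))) :=
      convex_prod_snd hKconv
    have hSsub : S ⊆ (Set.univ : Set α) ×ˢ (cycleHull H (Prod.snd '' S)) := by
      rintro z hz
      refine ⟨trivial, ?_⟩
      intro T' hT'
      exact hT'.1 ⟨z, hz, rfl⟩
    have hsub : cycleHull (G □ H) S ⊆ (Set.univ : Set α) ×ˢ (cycleHull H (Prod.snd '' S)) :=
      Set.sInter_subset_of_mem ⟨hSsub, hbig⟩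
    rw [hS] at hsub
    refine Set.eq_univ_of_forall (fun h2 => ?_)
    obtain ⟨g⟩ := hα
    exact (hsub (Set.mem_univ (g, h2))).2
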